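/- (Group-affinity of the IMU process model on SE₂(3).) Fix ω̃, ã, g ∈ ℝ³. Define f : Matrix 5 5 ℝ → Matrix 5 5 ℝ as follows: for a 5×5 matrix X, writing R for its top-left 3×3 block, v ∈ ℝ³ for the top three entries of its 4th column, and p ∈ ℝ³ for the top three entries of its 5th column, let f(X) be the 5×5 matrix whose top-left 3×3 block is R(ω̃)ₓ, whose 4th column has top three entries R ã + g, whose 5th column has top three entries v, and whose remaining entries (in particular the bottom two rows) are zero. Then f is group affine on the set of block-affine matrices: for all 5×5 matrices X₁, X₂ whose bottom two rows equal [0_{2×3} I₂], one has f(X₁ X₂) = f(X₁) X₂ + X₁ f(X₂) − X₁ f(I₅) X₂, where I₅ is the 5×5 identity matrix. -/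
import Mathlib

open Matrix

/-- The skew-symmetric matrix `(ω)ₓ` associated with `ω ∈ ℝ³`. -/
def skew3 (ω : Fin 3 → ℝ) : Matrix (Fin 3) (Fin 3) ℝ :=
  !![0, -ω 2, ω 1; ω 2, 0, -ω 0; -ω 1, ω 0, 0]

/-- The top-left `3 × 3` block `R` of a `5 × 5` matrix. -/
def blockR (X : Matrix (Fin 5) (Fin 5) ℝ) : Matrix (Fin 3) (Fin 3) ℝ :=
  X.submatrix (Fin.castLE (by norm_num)) (Fin.castLE (by norm_num))

/-- The top three entries `v` of the 4th column of a `5 × 5` matrix. -/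
def colv (X : Matrix (Fin 5) (Fin 5) ℝ) : Fin 3 → ℝ :=
  fun i => X (Fin.castLE (by norm_num) i) 3

/-- The IMU process model `f` on `5 × 5` matrices: for `X` with blocks
`R, v, p`, `f X` has top-left block `R (ω̃)ₓ`, 4th-column top entries
`R ã + g`, 5th-column top entries `v`, and zeros elsewhere. -/
def fIMU (ω a g : Fin 3 → ℝ) (X : Matrix (Fin 5) (Fin 5) ℝ) :
    Matrix (Fin 5) (Fin 5) ℝ :=
  Matrix.of fun i j =>
    if hi : (i : ℕ) < 3 then
      if hj : (j : ℕ) < 3 then (blockR X * skew3 ω) ⟨i, hi⟩ ⟨j, hj⟩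
      else if (j : ℕ) = 3 then (blockR X *ᵥ a + g) ⟨i, hi⟩
      else colv X ⟨i, hi⟩
    else 0

lemma castLE_zero (h : (3:ℕ) ≤ 5) : Fin.castLE h (0:Fin 3) = (0:Fin 5) := rfl
lemma castLE_one (h : (3:ℕ) ≤ 5) : Fin.castLE h (1:Fin 3) = (1:Fin 5) := rfl
lemma castLE_two (h : (3:ℕ) ≤ 5) : Fin.castLE h (2:Fin 3) = (2:Fin 5) := rfl

lemma fIMU_eq (ω a g : Fin 3 → ℝ) (X : Matrix (Fin 5) (Fin 5) ℝ) :
    fIMU ω a g X =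
    !![X 0 1 * ω 2 - X 0 2 * ω 1, X 0 2 * ω 0 - X 0 0 * ω 2, X 0 0 * ω 1 - X 0 1 * ω 0,
        X 0 0 * a 0 + X 0 1 * a 1 + X 0 2 * a 2 + g 0, X 0 3;
       X 1 1 * ω 2 - X 1 2 * ω 1, X 1 2 * ω 0 - X 1 0 * ω 2, X 1 0 * ω 1 - X 1 1 * ω 0,
        X 1 0 * a 0 + X 1 1 * a 1 + X 1 2 * a 2 + g 1, X 1 3;
       X 2 1 * ω 2 - X 2 2 * ω 1, X 2 2 * ω 0 - X 2 0 * ω 2, X 2 0 * ω 1 - X 2 1 * ω 0,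
        X 2 0 * a 0 + X 2 1 * a 1 + X 2 2 * a 2 + g 2, X 2 3;
       0, 0, 0, 0, 0;
       0, 0, 0, 0, 0] := by
  ext i j
  fin_cases i <;> fin_cases j <;>
    simp (config := { decide := true }) [fIMU, blockR, skew3, colv, Matrix.mul_apply, Matrix.mulVec, dotProduct,
      Fin.sum_univ_three, castLE_zero, castLE_one, castLE_two, Matrix.vecHead, Matrix.vecTail] <;> first | rfl | ring

set_option maxHeartbeats 3200000 in
/-- **Group-affinity of the IMU process model on SE₂(3).**
For all `5 × 5` matrices `X₁, X₂` whose bottom two rows equal `[0 I₂]`,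
`f (X₁ X₂) = f X₁ · X₂ + X₁ · f X₂ − X₁ · f I₅ · X₂`. -/
theorem fIMU_group_affine (ω a g : Fin 3 → ℝ)
    (X₁ X₂ : Matrix (Fin 5) (Fin 5) ℝ)
    (hX₁ : ∀ i : Fin 5, 3 ≤ (i : ℕ) → ∀ j : Fin 5,
      X₁ i j = if (i : ℕ) = (j : ℕ) then 1 else 0)
    (hX₂ : ∀ i : Fin 5, 3 ≤ (i : ℕ) → ∀ j : Fin 5,
      X₂ i j = if (i : ℕ) = (j : ℕ) then 1 else 0) :
    fIMU ω a g (X₁ * X₂) =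
      fIMU ω a g X₁ * X₂ + X₁ * fIMU ω a g X₂ - X₁ * fIMU ω a g 1 * X₂ := by
  have e13 := hX₁ 3 (by decide)
  have e14 := hX₁ 4 (by decide)
  have e23 := hX₂ 3 (by decide)
  have e24 := hX₂ 4 (by decide)
  rw [fIMU_eq, fIMU_eq, fIMU_eq, fIMU_eq]
  ext i j
  fin_cases i <;> fin_cases j <;>
    simp (config := { decide := true }) [Matrix.mul_apply, Fin.sum_univ_five,
      e13, e14, e23, e24, Matrix.one_apply, Matrix.vecMul, dotProduct, Matrix.vecHead, Matrix.vecTail] <;>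
    ring
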